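/- Let n be a positive natural number and M an n×n complex Schur stable matrix. Let N₁, N₂ be n×n positive semidefinite Hermitian matrices with N₁ ⪯ N₂, and suppose F₁, F₂ are Hermitian matrices satisfying Fᵢ = M·Fᵢ·Mᴴ + Nᵢ for i = 1, 2. Then F₁ ⪯ F₂. In particular (taking N₁ = N₂), the solution of the discrete-time Lyapunov equation with Schur stable M is unique. -/

import Mathlib

open Matrix Filter
open scoped ComplexOrder Topology

/-- A square complex matrix is Schur stable if every eigenvalue has modulus
strictly less than 1. -/
def IsSchurStable {n : ℕ} (M : Matrix (Fin n) (Fin n) ℂ) : Prop :=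
  ∀ z ∈ spectrum ℂ M, ‖z‖ < 1

section
attribute [local instance] Matrix.linftyOpNormedRing Matrix.linftyOpNormedAlgebra

private lemma schur_pow_entry_tendsto {n : ℕ} (hn : 0 < n) (M : Matrix (Fin n) (Fin n) ℂ)
    (hM : ∀ z ∈ spectrum ℂ M, ‖z‖ < 1) (i j : Fin n) :
    Tendsto (fun m : ℕ => (M ^ m) i j) atTop (𝓝 0) := by
  have : Nonempty (Fin n) := ⟨⟨0, hn⟩⟩
  have hr : spectralRadius ℂ M < 1 := by
    have := spectrum.spectralRadius_lt_of_forall_lt M (r := 1) (fun z hz => ?_)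
    · simpa using this
    · simpa [← coe_nnnorm, ← NNReal.coe_lt_one] using hM z hz
  obtain ⟨c, hc1, hc2⟩ := ENNReal.lt_iff_exists_nnreal_btwn.mp hr
  have hc2' : c < 1 := by exact_mod_cast hc2
  have hG := spectrum.pow_nnnorm_pow_one_div_tendsto_nhds_spectralRadius M
  have hev : ∀ᶠ m : ℕ in atTop, (‖M ^ m‖₊ : ENNReal) ^ (1 / (m : ℝ)) < c :=
    hG.eventually_lt_const hc1
  have hbound : ∀ᶠ m : ℕ in atTop, ‖(M ^ m) i j‖ ≤ (c : ℝ) ^ m := by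
    filter_upwards [hev, eventually_gt_atTop 0] with m hm hm0
    have h1 : (‖M ^ m‖₊ : ENNReal) < (c : ENNReal) ^ m := by
      have := ENNReal.rpow_lt_rpow hm (by positivity : (0:ℝ) < (m:ℝ))
      rwa [← ENNReal.rpow_mul, one_div, inv_mul_cancel₀ (by positivity : (m:ℝ) ≠ 0),
        ENNReal.rpow_one, ENNReal.rpow_natCast] at this
    have h2 : ‖M ^ m‖₊ ≤ c ^ m := by
      have := h1.le
      rw [← ENNReal.coe_pow, ENNReal.coe_le_coe] at this; exact this
    calc ‖(M ^ m) i j‖ ≤ ‖M ^ m‖ := by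
          have : ‖(M ^ m) i j‖₊ ≤ ‖M ^ m‖₊ := by
            rw [Matrix.linfty_opNNNorm_def]
            exact le_trans (Finset.single_le_sum (f := fun k => ‖(M ^ m) i k‖₊)
              (fun _ _ => zero_le) (Finset.mem_univ j))
              (Finset.le_sup (f := fun i => ∑ k, ‖(M ^ m) i k‖₊) (Finset.mem_univ i))
          exact_mod_cast this
      _ ≤ (c : ℝ) ^ m := by exact_mod_cast h2
  have hc : Tendsto (fun m : ℕ => (c : ℝ) ^ m) atTop (𝓝 0) :=
    tendsto_pow_atTop_nhds_zero_of_lt_one c.coe_nonneg hc2'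
  exact squeeze_zero_norm' hbound hc
end

/-- Monotonicity (and in particular uniqueness) of the solution of the
discrete-time Lyapunov equation `F = M F Mᴴ + N` with Schur stable `M` in the
inhomogeneity `N`. -/
theorem discrete_lyapunov_solution_monotone {n : ℕ} (hn : 0 < n)
    (M : Matrix (Fin n) (Fin n) ℂ) (hM : IsSchurStable M)
    (N₁ N₂ : Matrix (Fin n) (Fin n) ℂ) (hN₁ : N₁.PosSemidef) (hN₂ : N₂.PosSemidef)
    (hN : (N₂ - N₁).PosSemidef)
    (F₁ F₂ : Matrix (Fin n) (Fin n) ℂ) (hF₁ : F₁.IsHermitian) (hF₂ : F₂.IsHermitian)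
    (hLyap₁ : F₁ = M * F₁ * Mᴴ + N₁) (hLyap₂ : F₂ = M * F₂ * Mᴴ + N₂) :
    (F₂ - F₁).PosSemidef := by
  have hD : F₂ - F₁ = M * (F₂ - F₁) * Mᴴ + (N₂ - N₁) := by
    conv_lhs => rw [hLyap₁, hLyap₂]
    noncomm_ring
  refine Matrix.PosSemidef.of_dotProduct_mulVec_nonneg (hF₂.sub hF₁) fun x => ?_
  set y : ℕ → (Fin n → ℂ) := fun m => (M ^ m)ᴴ *ᵥ x with hy
  set a : ℕ → ℂ := fun m => star (y m) ⬝ᵥ ((F₂ - F₁) *ᵥ y m) with ha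
  have key : ∀ (u w : Fin n → ℂ), star u ⬝ᵥ (M *ᵥ w) = star (Mᴴ *ᵥ u) ⬝ᵥ w := by
    intro u w
    rw [Matrix.star_mulVec, Matrix.conjTranspose_conjTranspose, Matrix.dotProduct_mulVec]
  have hysucc : ∀ m, y (m + 1) = Mᴴ *ᵥ y m := by
    intro m
    simp only [hy, pow_succ, Matrix.conjTranspose_mul, ← Matrix.mulVec_mulVec]
  have hstep : ∀ m, a (m + 1) ≤ a m := by
    intro m
    have h1 : a m = a (m + 1) + star (y m) ⬝ᵥ ((N₂ - N₁) *ᵥ y m) := by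
      have : a m = star (y m) ⬝ᵥ ((M * (F₂ - F₁) * Mᴴ + (N₂ - N₁)) *ᵥ y m) := by
        rw [ha]; rw [← hD]
      rw [Matrix.add_mulVec, dotProduct_add] at this
      rw [this]
      congr 1
      rw [← Matrix.mulVec_mulVec, ← Matrix.mulVec_mulVec, key, ← hysucc]
    rw [h1]
    exact le_add_of_nonneg_right (hN.dotProduct_mulVec_nonneg (y m))
  have hmono : ∀ m, a m ≤ a 0 := by
    intro m
    induction m with
    | zero => exact le_refl _
    | succ k ih => exact (hstep k).trans ih
  have hMm : Tendsto (fun m : ℕ => M ^ m) atTop (𝓝 0) := by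
    apply tendsto_pi_nhds.mpr; intro i
    apply tendsto_pi_nhds.mpr; intro j
    simpa using schur_pow_entry_tendsto hn M hM i j
  have hvec : Continuous fun A : Matrix (Fin n) (Fin n) ℂ => Aᴴ *ᵥ x :=
    (continuous_id.matrix_conjTranspose).matrix_mulVec continuous_const
  have hcont : Continuous fun A : Matrix (Fin n) (Fin n) ℂ =>
      star (Aᴴ *ᵥ x) ⬝ᵥ ((F₂ - F₁) *ᵥ (Aᴴ *ᵥ x)) :=
    (continuous_star.comp hvec).dotProduct (continuous_const.matrix_mulVec hvec)
  have htend : Tendsto a atTop (𝓝 0) := by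
    have := (hcont.tendsto 0).comp hMm
    simpa [ha, hy, Function.comp_def] using this
  have ha0 : a 0 = star x ⬝ᵥ ((F₂ - F₁) *ᵥ x) := by simp [ha, hy]
  rw [← ha0]
  have him : ∀ m, (a m).im = (a 0).im := by
    intro m
    induction m with
    | zero => rfl
    | succ k ih => rw [← ih]; exact (Complex.le_def.mp (hstep k)).2
  have hre : ∀ m, (a m).re ≤ (a 0).re := fun m => (Complex.le_def.mp (hmono m)).1
  have htre : Tendsto (fun m => (a m).re) atTop (𝓝 0) := by
    have := (Complex.continuous_re.tendsto 0).comp htend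
    simpa [Function.comp_def] using this
  have htim : Tendsto (fun m => (a m).im) atTop (𝓝 0) := by
    have := (Complex.continuous_im.tendsto 0).comp htend
    simpa [Function.comp_def] using this
  have h1 : 0 ≤ (a 0).re := le_of_tendsto htre (Filter.Eventually.of_forall hre)
  have h2 : (a 0).im = 0 := by
    have hconst : Tendsto (fun _ : ℕ => (a 0).im) atTop (𝓝 0) := by
      have : (fun m : ℕ => (a m).im) = fun _ : ℕ => (a 0).im := funext him
      rwa [this] at htim
    exact tendsto_nhds_unique tendsto_const_nhds hconst
  rw [Complex.le_def]
  exact ⟨by simpa using h1, by simp [h2]⟩
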